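/- Let n ≥ 1 be an integer and let u₁, …, uₙ, v₁, …, vₙ ≥ 1 and N ≥ 1 be integers with v₁ + ⋯ + vₙ ≥ N + 1. Then ∫_{(0,1)ⁿ} x₁^{u₁−1}⋯xₙ^{uₙ−1}(1−x₁)^{v₁−1}⋯(1−xₙ)^{vₙ−1}/(1 − x₁⋯xₙ)^N dx₁⋯dxₙ = Σ_{k=0}^∞ C(k+N−1, N−1) · ∏_{i=1}^n [(vᵢ−1)! · (k+uᵢ−1)! / (k+uᵢ+vᵢ−1)!], where C(·,·) denotes the binomial coefficient; in particular, the series on the right-hand side converges. -/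

import Mathlib

open MeasureTheory intervalIntegral

private lemma beta_interval : ∀ (b a : ℕ), (∫ x in (0:ℝ)..1, x ^ a * (1 - x) ^ b)
    = (a.factorial : ℝ) * b.factorial / (a + b + 1).factorial := by
  intro b
  induction b with
  | zero =>
    intro a
    simp only [pow_zero, mul_one, integral_pow, one_pow, Nat.factorial_zero, Nat.cast_one,
      add_zero, Nat.factorial_succ]
    rw [zero_pow (by omega), sub_zero]
    have : ((a.factorial : ℝ)) ≠ 0 := Nat.cast_ne_zero.mpr a.factorial_ne_zero
    push_cast
    field_simp
  | succ b ih =>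
    intro a
    have h1 : ∀ x ∈ Set.uIcc (0:ℝ) 1, HasDerivAt (fun y : ℝ => (1 - y) ^ (b + 1))
        (-(((b:ℝ)+1) * (1 - x) ^ b)) x := by
      intro x _
      have h := (hasDerivAt_pow (b+1) (1 - x)).comp x ((hasDerivAt_id x).const_sub 1)
      simp only [Function.comp_def, Nat.add_sub_cancel, Nat.cast_add, Nat.cast_one] at h
      exact h.congr_deriv (by ring)
    have h2 : ∀ x ∈ Set.uIcc (0:ℝ) 1, HasDerivAt (fun y : ℝ => y ^ (a + 1) / ((a:ℝ)+1))
        (x ^ a) x := by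
      intro x _
      have h := (hasDerivAt_pow (a+1) x).div_const ((a:ℝ)+1)
      simp only [Nat.add_sub_cancel, Nat.cast_add, Nat.cast_one] at h
      have : ((a:ℝ)+1) ≠ 0 := by positivity
      exact h.congr_deriv (by field_simp)
    have hu' : IntervalIntegrable (fun x : ℝ => -(((b:ℝ)+1) * (1 - x) ^ b)) volume 0 1 :=
      (((continuous_const.mul ((continuous_const.sub continuous_id).pow b)).neg)).intervalIntegrable 0 1
    have hv' : IntervalIntegrable (fun x : ℝ => x ^ a) volume 0 1 :=
      (continuous_pow a).intervalIntegrable 0 1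
    have key := intervalIntegral.integral_mul_deriv_eq_deriv_mul h1 h2 hu' hv'
    have hre : (fun x : ℝ => -(((b:ℝ)+1) * (1 - x) ^ b) * (x ^ (a+1) / ((a:ℝ)+1)))
        = fun x : ℝ => (-(((b:ℝ)+1)/((a:ℝ)+1))) * (x ^ (a+1) * (1 - x) ^ b) := by
      funext x; ring
    rw [hre, intervalIntegral.integral_const_mul, ih (a+1)] at key
    have hgoal : (∫ x in (0:ℝ)..1, x ^ a * (1 - x) ^ (b+1))
        = ∫ x in (0:ℝ)..1, (1 - x) ^ (b+1) * x ^ a := by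
      simp_rw [mul_comm]
    rw [hgoal, key]
    rw [show a + 1 + b + 1 = a + (b + 1) + 1 from by omega]
    norm_num
    rw [Nat.factorial_succ a, Nat.factorial_succ b]
    have hF : ((a + (b+1) + 1).factorial : ℝ) ≠ 0 := Nat.cast_ne_zero.mpr (Nat.factorial_ne_zero _)
    have hA : ((a:ℝ)+1) ≠ 0 := by positivity
    push_cast
    field_simp

private lemma beta_Ioo (a b : ℕ) : (∫ x in Set.Ioo (0:ℝ) 1, x ^ a * (1 - x) ^ b)
    = (a.factorial : ℝ) * b.factorial / (a + b + 1).factorial := by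
  rw [← MeasureTheory.integral_Ioc_eq_integral_Ioo, ← intervalIntegral.integral_of_le zero_le_one]
  exact beta_interval b a

private lemma fac_lb (k m : ℕ) (h : k ≤ m) : ∀ t : ℕ, m.factorial * (k+1)^t ≤ (m+t).factorial := by
  intro t
  induction t with
  | zero => simp
  | succ t ih =>
    calc m.factorial * (k+1)^(t+1) = (m.factorial * (k+1)^t) * (k+1) := by ring
    _ ≤ (m+t).factorial * (m+t+1) := Nat.mul_le_mul ih (by omega)
    _ = (m+t+1).factorial := by rw [Nat.factorial_succ]; ring

/-- The open unit cube `(0,1)^n` in `ℝ^n`. -/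
def unitCube (n : ℕ) : Set (Fin n → ℝ) := Set.univ.pi fun _ => Set.Ioo (0 : ℝ) 1

theorem stmt17 (n : ℕ) (hn : 1 ≤ n) (u v : Fin n → ℕ)
    (hu : ∀ i, 1 ≤ u i) (hv : ∀ i, 1 ≤ v i)
    (N : ℕ) (hN : 1 ≤ N) (hsum : N + 1 ≤ ∑ i, v i) :
    Summable (fun k : ℕ => (Nat.choose (k + N - 1) (N - 1) : ℝ) *
      ∏ i, (((v i - 1).factorial : ℝ) * ((k + u i - 1).factorial : ℝ)
        / ((k + u i + v i - 1).factorial : ℝ))) ∧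
    (∫ x in unitCube n,
        (∏ i, x i ^ (u i - 1) * (1 - x i) ^ (v i - 1)) / (1 - ∏ i, x i) ^ N)
      = ∑' k : ℕ, (Nat.choose (k + N - 1) (N - 1) : ℝ) *
          ∏ i, (((v i - 1).factorial : ℝ) * ((k + u i - 1).factorial : ℝ)
            / ((k + u i + v i - 1).factorial : ℝ)) := by
  classical
  have hNE : Nonempty (Fin n) := ⟨⟨0, hn⟩⟩
  have hcube_meas : MeasurableSet (unitCube n) :=
    MeasurableSet.univ_pi fun _ => measurableSet_Ioo
  set g : ℕ → Fin n → ℝ → ℝ :=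
    fun k i => (Set.Ioo (0:ℝ) 1).indicator
      (fun t => t ^ (k + u i - 1) * (1 - t) ^ (v i - 1)) with hg
  set F : ℕ → (Fin n → ℝ) → ℝ :=
    fun k x => (Nat.choose (k + N - 1) (N - 1) : ℝ) * ∏ i, g k i (x i) with hF
  set T : ℕ → ℝ := fun k : ℕ => (Nat.choose (k + N - 1) (N - 1) : ℝ) *
      ∏ i, (((v i - 1).factorial : ℝ) * ((k + u i - 1).factorial : ℝ)
        / ((k + u i + v i - 1).factorial : ℝ)) with hTdef
  have hg_nonneg : ∀ k i t, 0 ≤ g k i t := by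
    intro k i t
    refine Set.indicator_nonneg (fun s hs => ?_) t
    exact mul_nonneg (pow_nonneg hs.1.le _) (pow_nonneg (by linarith [hs.2]) _)
  have hg_int : ∀ k i, Integrable (g k i) := by
    intro k i
    rw [hg, integrable_indicator_iff measurableSet_Ioo]
    exact (((continuous_pow _).mul ((continuous_const.sub continuous_id).pow _)).integrableOn_Icc).mono_set
      Set.Ioo_subset_Icc_self
  have hint_g : ∀ k i, (∫ t : ℝ, g k i t) =
      ((k + u i - 1).factorial : ℝ) * ((v i - 1).factorial : ℝ)
        / ((k + u i + v i - 1).factorial : ℝ) := by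
    intro k i
    rw [hg]
    rw [MeasureTheory.integral_indicator measurableSet_Ioo, beta_Ioo]
    rw [show (k + u i - 1) + (v i - 1) + 1 = k + u i + v i - 1 from by
      have := hu i; have := hv i; omega]
  have hF_int : ∀ k, Integrable (F k) := fun k =>
    (Integrable.fintype_prod (f := fun i => g k i) (fun i => hg_int k i)).const_mul _
  have hF_nonneg : ∀ k x, 0 ≤ F k x := fun k x =>
    mul_nonneg (by positivity) (Finset.prod_nonneg fun i _ => hg_nonneg k i (x i))
  have hF_integral : ∀ k, (∫ x : Fin n → ℝ, F k x) = T k := by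
    intro k
    simp only [hF, hTdef]
    rw [MeasureTheory.integral_const_mul,
      MeasureTheory.integral_fintype_prod_volume_eq_prod (f := fun i => g k i)]
    congr 1
    refine Finset.prod_congr rfl fun i _ => ?_
    rw [hint_g]
    ring
  have hT_nonneg : ∀ k, 0 ≤ T k := fun k => by
    rw [← hF_integral k]; exact integral_nonneg (hF_nonneg k)
  -- summability
  have hTsum : Summable T := by
    set P : ℝ := ∏ i, ((v i - 1).factorial : ℝ) with hP
    have hP0 : 0 ≤ P := Finset.prod_nonneg fun i _ => by positivity
    have hbound : ∀ k : ℕ, T k ≤ ((N:ℝ)^(N-1) * P) * (1/((k:ℝ)+1)^2) := by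
      intro k
      have hchoose : ((Nat.choose (k+N-1) (N-1)) : ℝ) ≤ (N:ℝ)^(N-1) * ((k:ℝ)+1)^(N-1) := by
        have h1 : (k+N-1).choose (N-1) ≤ (k+N-1)^(N-1) := Nat.choose_le_pow _ _
        have h2 : (k+N-1)^(N-1) ≤ (N*(k+1))^(N-1) :=
          Nat.pow_le_pow_left (by
            have h3 : k ≤ N * k := Nat.le_mul_of_pos_left k hN
            calc k + N - 1 ≤ k + N := by omega
              _ ≤ N * k + N := by omega
              _ = N * (k + 1) := by ring) _
        calc ((Nat.choose (k+N-1) (N-1)):ℝ) ≤ (((N*(k+1))^(N-1) : ℕ) : ℝ) := by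
              exact_mod_cast le_trans h1 h2
          _ = (N:ℝ)^(N-1) * ((k:ℝ)+1)^(N-1) := by push_cast [mul_pow]; ring
      have hfac : ∀ i, ((v i - 1).factorial : ℝ) * ((k + u i - 1).factorial : ℝ)
          / ((k + u i + v i - 1).factorial : ℝ)
          ≤ ((v i - 1).factorial : ℝ) / ((k:ℝ)+1)^(v i) := by
        intro i
        have hm := fac_lb k (k + u i - 1) (by have := hu i; omega) (v i)
        rw [show k + u i - 1 + v i = k + u i + v i - 1 from by have := hu i; omega] at hm
        have hmR : ((k + u i - 1).factorial : ℝ) * ((k:ℝ)+1)^(v i)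
            ≤ ((k + u i + v i - 1).factorial : ℝ) := by exact_mod_cast hm
        rw [div_le_div_iff₀ (by positivity) (by positivity)]
        calc ((v i - 1).factorial : ℝ) * ((k + u i - 1).factorial : ℝ) * ((k:ℝ)+1)^(v i)
            = ((v i - 1).factorial : ℝ) * (((k + u i - 1).factorial : ℝ) * ((k:ℝ)+1)^(v i)) := by
              ring
          _ ≤ ((v i - 1).factorial : ℝ) * ((k + u i + v i - 1).factorial : ℝ) :=
              mul_le_mul_of_nonneg_left hmR (by positivity)
      have hprod : (∏ i, ((v i - 1).factorial : ℝ) * ((k + u i - 1).factorial : ℝ)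
          / ((k + u i + v i - 1).factorial : ℝ)) ≤ P / ((k:ℝ)+1)^(∑ i, v i) := by
        calc (∏ i, ((v i - 1).factorial : ℝ) * ((k + u i - 1).factorial : ℝ)
            / ((k + u i + v i - 1).factorial : ℝ))
            ≤ ∏ i, ((v i - 1).factorial : ℝ) / ((k:ℝ)+1)^(v i) :=
              Finset.prod_le_prod (fun i _ => by positivity) (fun i _ => hfac i)
          _ = P / ((k:ℝ)+1)^(∑ i, v i) := by
              rw [Finset.prod_div_distrib, Finset.prod_pow_eq_pow_sum]
      have hpow : ((k:ℝ)+1)^(N-1) / ((k:ℝ)+1)^(∑ i, v i) ≤ 1/((k:ℝ)+1)^2 := by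
        rw [div_le_div_iff₀ (by positivity) (by positivity), one_mul, ← pow_add]
        exact pow_le_pow_right₀ (by linarith [Nat.cast_nonneg (α := ℝ) k]) (by omega)
      calc T k ≤ ((N:ℝ)^(N-1) * ((k:ℝ)+1)^(N-1)) * (P / ((k:ℝ)+1)^(∑ i, v i)) := by
            rw [hTdef]
            exact mul_le_mul hchoose hprod
              (Finset.prod_nonneg fun i _ => by positivity) (by positivity)
        _ = ((N:ℝ)^(N-1) * P) * (((k:ℝ)+1)^(N-1) / ((k:ℝ)+1)^(∑ i, v i)) := by ring
        _ ≤ ((N:ℝ)^(N-1) * P) * (1/((k:ℝ)+1)^2) :=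
            mul_le_mul_of_nonneg_left hpow (by positivity)
    have hs2 : Summable (fun k : ℕ => ((N:ℝ)^(N-1) * P) * (1/((k:ℝ)+1)^2)) := by
      have h0 : Summable (fun k : ℕ => 1/((k:ℝ))^2) :=
        Real.summable_one_div_nat_pow.mpr (by norm_num)
      have h1 := (summable_nat_add_iff 1).mpr h0
      have h1' : Summable (fun k : ℕ => 1/((k:ℝ)+1)^2) := by
        exact h1.congr fun k => by simp only [Nat.cast_add, Nat.cast_one]
      exact h1'.mul_left _
    exact Summable.of_nonneg_of_le hT_nonneg hbound hs2
  -- pointwise identification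
  have hptwise : ∀ x : Fin n → ℝ, (unitCube n).indicator
      (fun x => (∏ i, x i ^ (u i - 1) * (1 - x i) ^ (v i - 1)) / (1 - ∏ i, x i) ^ N) x
      = ∑' k, F k x := by
    intro x
    by_cases hx : x ∈ unitCube n
    · rw [Set.indicator_of_mem hx]
      have hx' : ∀ i, x i ∈ Set.Ioo (0:ℝ) 1 := fun i => hx i (Set.mem_univ i)
      have hr0 : 0 ≤ ∏ i, x i := Finset.prod_nonneg fun i _ => (hx' i).1.le
      have hr1 : ∏ i, x i < 1 := by
        calc ∏ i, x i < ∏ _i : Fin n, (1:ℝ) :=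
            Finset.prod_lt_prod_of_nonempty (fun i _ => (hx' i).1) (fun i _ => (hx' i).2)
              Finset.univ_nonempty
          _ = 1 := Finset.prod_const_one
      have hnorm : ‖∏ i, x i‖ < 1 := by
        rw [Real.norm_eq_abs, abs_of_nonneg hr0]; exact hr1
      have hs := (hasSum_choose_mul_geometric_of_norm_lt_one (N-1) hnorm).mul_right
        (∏ i, x i ^ (u i - 1) * (1 - x i) ^ (v i - 1))
      have heq : (fun k : ℕ => (((k + (N-1)).choose (N-1) : ℕ) : ℝ) * (∏ i, x i)^k *
          (∏ i, x i ^ (u i - 1) * (1 - x i) ^ (v i - 1))) = fun k => F k x := by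
        funext k
        simp only [hF]
        have h1 : ∀ i, g k i (x i) = x i ^ (k + u i - 1) * (1 - x i) ^ (v i - 1) := fun i =>
          Set.indicator_of_mem (hx' i) _
        have h2a : (∏ i, g k i (x i))
            = ∏ i, (x i ^ k * (x i ^ (u i - 1) * (1 - x i) ^ (v i - 1))) := by
          refine Finset.prod_congr rfl fun i _ => ?_
          rw [h1 i, show k + u i - 1 = k + (u i - 1) from by have := hu i; omega, pow_add]
          ring
        have h2 : (∏ i, g k i (x i)) = (∏ i, x i)^k *
            (∏ i, x i ^ (u i - 1) * (1 - x i) ^ (v i - 1)) := by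
          rw [h2a, Finset.prod_mul_distrib, Finset.prod_pow]
        rw [h2, show k + (N-1) = k + N - 1 from by omega]
        ring
      refine (HasSum.tsum_eq ?_).symm
      rw [← heq]
      rw [show N - 1 + 1 = N from by omega, one_div, inv_mul_eq_div] at hs
      exact hs
    · rw [Set.indicator_of_notMem hx]
      have : ∃ i, x i ∉ Set.Ioo (0:ℝ) 1 := by
        by_contra h
        push_neg at h
        exact hx fun i _ => h i
      obtain ⟨i, hi⟩ := this
      have hFz : ∀ k, F k x = 0 := by
        intro k
        simp only [hF]
        have : g k i (x i) = 0 := Set.indicator_of_notMem hi _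
        rw [Finset.prod_eq_zero (Finset.mem_univ i) this, mul_zero]
      simp only [hFz, tsum_zero]
  -- conclusion
  refine ⟨hTsum, ?_⟩
  have hnormsum : Summable (fun k => ∫ a, ‖F k a‖) := by
    have : ∀ k, (∫ a, ‖F k a‖) = T k := by
      intro k
      rw [← hF_integral k]
      exact integral_congr_ae (Filter.Eventually.of_forall fun a =>
        Real.norm_of_nonneg (hF_nonneg k a))
    simp only [this]
    exact hTsum
  have hmain := MeasureTheory.integral_tsum_of_summable_integral_norm hF_int hnormsum
  calc (∫ x in unitCube n,
        (∏ i, x i ^ (u i - 1) * (1 - x i) ^ (v i - 1)) / (1 - ∏ i, x i) ^ N)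
      = ∫ x : Fin n → ℝ, (unitCube n).indicator
          (fun x => (∏ i, x i ^ (u i - 1) * (1 - x i) ^ (v i - 1)) / (1 - ∏ i, x i) ^ N) x :=
        (MeasureTheory.integral_indicator hcube_meas).symm
    _ = ∫ x : Fin n → ℝ, ∑' k, F k x := by
        refine integral_congr_ae (Filter.Eventually.of_forall fun x => ?_)
        exact hptwise x
    _ = ∑' k, ∫ x : Fin n → ℝ, F k x := hmain.symm
    _ = ∑' k, T k := by simp_rw [hF_integral]
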